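/- Let θ ∈ ℚ^{Q₀} be a rational weight, (V,ρ) a nonzero complex representation of Q, and h an Einstein–Hermitian metric on (V,ρ) with respect to θ. Then the following are equivalent: (1) h is irreducible; (2) (V,ρ) is θ-stable; (3) (V,ρ) is Schur, i.e. every endomorphism of (V,ρ) equals λ·id for some λ ∈ ℂ. -/

import Mathlib

open Module

variable {Q₀ Q₁ : Type*} [Fintype Q₀] [Fintype Q₁] [DecidableEq Q₀]
  (s t : Q₁ → Q₀)
  (V : Q₀ → Type*) [∀ a, NormedAddCommGroup (V a)] [∀ a, InnerProductSpace ℂ (V a)]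
  [∀ a, FiniteDimensional ℂ (V a)]

/-- `W` is a subrepresentation of the representation `(V, ρ)` of the quiver
`(Q₀, Q₁, s, t)`. -/
def IsSubrep (ρ : ∀ α, V (s α) →ₗ[ℂ] V (t α)) (W : ∀ a, Submodule ℂ (V a)) : Prop :=
  ∀ α, ∀ x ∈ W (s α), ρ α x ∈ W (t α)

/-- `f` is an endomorphism of the representation `(V, ρ)`. -/
def IsRepEndo (ρ : ∀ α, V (s α) →ₗ[ℂ] V (t α)) (f : ∀ a, V a →ₗ[ℂ] V a) : Prop :=
  ∀ α, (f (t α)) ∘ₗ (ρ α) = (ρ α) ∘ₗ (f (s α))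

/-- The representation `(V, ρ)` is Schur: every endomorphism is a scalar multiple of the
identity. -/
def IsSchurRep (ρ : ∀ α, V (s α) →ₗ[ℂ] V (t α)) : Prop :=
  ∀ f : ∀ a, V a →ₗ[ℂ] V a, IsRepEndo s t V ρ f →
    ∃ c : ℂ, ∀ a, f a = c • LinearMap.id

/-- `f` is skew-Hermitian with respect to the Hermitian metric given by the inner
products on the `V a`. -/
def IsSkewHermEndo (f : ∀ a, V a →ₗ[ℂ] V a) : Prop :=
  ∀ a, ∀ v w : V a, inner (𝕜 := ℂ) (f a v) w + inner (𝕜 := ℂ) v (f a w) = 0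

/-- The Hermitian metric on `(V, ρ)` is irreducible: every skew-Hermitian endomorphism of
`(V, ρ)` is a scalar multiple of the identity. -/
def IsIrreducibleMetric (ρ : ∀ α, V (s α) →ₗ[ℂ] V (t α)) : Prop :=
  ∀ f : ∀ a, V a →ₗ[ℂ] V a, IsRepEndo s t V ρ f → IsSkewHermEndo V f →
    ∃ c : ℂ, ∀ a, f a = c • LinearMap.id

/-- Two subrepresentations are orthogonal with respect to the Hermitian metric. -/
def OrthSubreps (W W' : ∀ a, Submodule ℂ (V a)) : Prop :=
  ∀ a, ∀ v ∈ W a, ∀ w ∈ W' a, inner (𝕜 := ℂ) v w = (0 : ℂ)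

/-- The `θ`-slope of the representation `(V, ρ)`. -/
noncomputable def repSlope (θ : Q₀ → ℝ) : ℝ :=
  (∑ a, θ a * (finrank ℂ (V a) : ℝ)) / (∑ a, (finrank ℂ (V a) : ℝ))

/-- The `θ`-slope of a subrepresentation `W`. -/
noncomputable def subSlope (θ : Q₀ → ℝ) (W : ∀ a, Submodule ℂ (V a)) : ℝ :=
  (∑ a, θ a * (finrank ℂ (W a) : ℝ)) / (∑ a, (finrank ℂ (W a) : ℝ))

/-- The representation `(V, ρ)` is `θ`-stable: it is nonzero and every nonzero proper
subrepresentation has strictly smaller `θ`-slope. -/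
noncomputable def IsStableRep (ρ : ∀ α, V (s α) →ₗ[ℂ] V (t α)) (θ : Q₀ → ℝ) : Prop :=
  (0 < ∑ a, finrank ℂ (V a)) ∧
  ∀ W : ∀ a, Submodule ℂ (V a), IsSubrep s t V ρ W →
    (∃ a, W a ≠ ⊥) → (∃ a, W a ≠ ⊤) → subSlope V θ W < repSlope V θ

/-- The subrepresentation `W` of `(V, ρ)` is `θ`-stable as a representation in its own
right: it is nonzero and every nonzero proper subrepresentation of it (i.e. every
subrepresentation of `(V, ρ)` contained in `W`) has strictly smaller `θ`-slope. -/
noncomputable def IsStableSubrep (ρ : ∀ α, V (s α) →ₗ[ℂ] V (t α)) (θ : Q₀ → ℝ)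
    (W : ∀ a, Submodule ℂ (V a)) : Prop :=
  (∃ a, W a ≠ ⊥) ∧
  ∀ W' : ∀ a, Submodule ℂ (V a), IsSubrep s t V ρ W' → (∀ a, W' a ≤ W a) →
    (∃ a, W' a ≠ ⊥) → W' ≠ W → subSlope V θ W' < subSlope V θ W

/-- The summand `ρ_α ∘ ρ_α*` of `K_θ(V,ρ,h)_a`, for an arrow `α` with target `a`. -/
noncomputable def tTerm (ρ : ∀ α, V (s α) →ₗ[ℂ] V (t α)) (a : Q₀)
    (α : {α : Q₁ // t α = a}) : Module.End ℂ (V a) :=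
  α.2 ▸ ((ρ α.1) ∘ₗ (LinearMap.adjoint (ρ α.1)))

/-- The summand `ρ_α* ∘ ρ_α` of `K_θ(V,ρ,h)_a`, for an arrow `α` with source `a`. -/
noncomputable def sTerm (ρ : ∀ α, V (s α) →ₗ[ℂ] V (t α)) (a : Q₀)
    (α : {α : Q₁ // s α = a}) : Module.End ℂ (V a) :=
  α.2 ▸ ((LinearMap.adjoint (ρ α.1)) ∘ₗ (ρ α.1))

/-- The endomorphism `K_θ(V,ρ,h)_a = θ_a id + ∑_{t(α)=a} ρ_α ρ_α* − ∑_{s(α)=a} ρ_α* ρ_α`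
of `V a`. -/
noncomputable def Kop (ρ : ∀ α, V (s α) →ₗ[ℂ] V (t α)) (θ : Q₀ → ℝ) (a : Q₀) :
    Module.End ℂ (V a) :=
  ((θ a : ℂ)) • (LinearMap.id : V a →ₗ[ℂ] V a) +
    (∑ α : {α : Q₁ // t α = a}, tTerm s t V ρ a α) -
    (∑ α : {α : Q₁ // s α = a}, sTerm s t V ρ a α)

/-- The Hermitian metric `h` on `(V, ρ)` is Einstein–Hermitian with respect to `θ`:
`K_θ(V,ρ,h)_a = c • id` for all `a`, for some constant `c ∈ ℂ`. -/
noncomputable def IsEinsteinHermitian (ρ : ∀ α, V (s α) →ₗ[ℂ] V (t α)) (θ : Q₀ → ℝ) :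
    Prop :=
  ∃ c : ℂ, ∀ a, Kop s t V ρ θ a = c • (LinearMap.id : V a →ₗ[ℂ] V a)

section myHelpers

open Module LinearMap

set_option linter.unusedSectionVars false in
private lemma my_trace_eq_sum_inner {E : Type*} [NormedAddCommGroup E] [InnerProductSpace ℂ E]
    [FiniteDimensional ℂ E] {ι : Type*} [Fintype ι] [DecidableEq ι]
    (b : OrthonormalBasis ι ℂ E) (T : E →ₗ[ℂ] E) :
    trace ℂ E T = ∑ i, (inner ℂ (b i) (T (b i)) : ℂ) := by
  rw [LinearMap.trace_eq_matrix_trace ℂ b.toBasis, Matrix.trace]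
  congr 1
  ext i
  rw [Matrix.diag_apply, LinearMap.toMatrix_apply, OrthonormalBasis.coe_toBasis_repr_apply,
    OrthonormalBasis.repr_apply_apply, OrthonormalBasis.coe_toBasis]

private lemma my_trace_adjoint_comp_self {E F : Type*} [NormedAddCommGroup E]
    [InnerProductSpace ℂ E] [FiniteDimensional ℂ E] [NormedAddCommGroup F]
    [InnerProductSpace ℂ F] [FiniteDimensional ℂ F] (B : E →ₗ[ℂ] F) :
    ∃ r : ℝ, 0 ≤ r ∧ trace ℂ E (adjoint B ∘ₗ B) = (r : ℂ) ∧ (r = 0 → B = 0) := by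
  let b := stdOrthonormalBasis ℂ E
  refine ⟨∑ i, ‖B (b i)‖ ^ 2, by positivity, ?_, ?_⟩
  · rw [my_trace_eq_sum_inner b]
    push_cast
    refine Finset.sum_congr rfl fun i _ => ?_
    rw [show ((⇑(adjoint B) ∘ ⇑B) (b i)) = adjoint B (B (b i)) from rfl,
      LinearMap.adjoint_inner_right, inner_self_eq_norm_sq_to_K]
    norm_num
  · intro h
    have h0 : ∀ i, B (b i) = 0 := by
      intro i
      have := (Finset.sum_eq_zero_iff_of_nonneg (fun i _ => by positivity)).1 h i
        (Finset.mem_univ i)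
      have : ‖B (b i)‖ = 0 := by nlinarith [norm_nonneg (B (b i))]
      simpa using this
    exact b.toBasis.ext fun i => by simp [h0 i]

private noncomputable def myProj {E : Type*} [NormedAddCommGroup E] [InnerProductSpace ℂ E]
    [FiniteDimensional ℂ E] (K : Submodule ℂ E) : E →ₗ[ℂ] E :=
  K.subtype ∘ₗ (K.orthogonalProjection : E →L[ℂ] K).toLinearMap

section projFacts
variable {E : Type*} [NormedAddCommGroup E] [InnerProductSpace ℂ E] [FiniteDimensional ℂ E]

private lemma myProj_apply_mem (K : Submodule ℂ E) (x : E) : myProj K x ∈ K := by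
  simp [myProj]

private lemma myProj_eq_self (K : Submodule ℂ E) {x : E} (hx : x ∈ K) : myProj K x = x := by
  exact (Submodule.starProjection_eq_self_iff (K := K)).mpr hx

private lemma myProj_idem (K : Submodule ℂ E) : myProj K ∘ₗ myProj K = myProj K := by
  ext x
  exact myProj_eq_self K (myProj_apply_mem K x)

private lemma myProj_adjoint (K : Submodule ℂ E) : adjoint (myProj K) = myProj K := by
  rw [eq_comm, LinearMap.eq_adjoint_iff]
  intro x y
  exact Submodule.inner_starProjection_left_eq_right K x y

private lemma myProj_trace (K : Submodule ℂ E) : trace ℂ E (myProj K) = (finrank ℂ K : ℂ) := by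
  rw [myProj, trace_comp_comm']
  have : ((K.orthogonalProjection : E →L[ℂ] K).toLinearMap ∘ₗ K.subtype) = LinearMap.id := by
    ext x
    simp
  rw [this, trace_id]

private lemma myProj_top : myProj (⊤ : Submodule ℂ E) = LinearMap.id := by
  ext x
  exact myProj_eq_self ⊤ trivial
end projFacts

private lemma arrow_trace_identity {E F : Type*} [NormedAddCommGroup E]
    [InnerProductSpace ℂ E] [FiniteDimensional ℂ E] [NormedAddCommGroup F]
    [InnerProductSpace ℂ F] [FiniteDimensional ℂ F]
    (X : E →ₗ[ℂ] F) (P : F →ₗ[ℂ] F) (Q : E →ₗ[ℂ] E)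
    (hP : adjoint P = P) (hQ : adjoint Q = Q) (hP2 : P ∘ₗ P = P) (hQ2 : Q ∘ₗ Q = Q)
    (hsub : P ∘ₗ (X ∘ₗ Q) = X ∘ₗ Q) :
    trace ℂ E (adjoint (P ∘ₗ X - X ∘ₗ Q) ∘ₗ (P ∘ₗ X - X ∘ₗ Q)) =
      trace ℂ F (P ∘ₗ (X ∘ₗ adjoint X)) - trace ℂ E (Q ∘ₗ (adjoint X ∘ₗ X)) := by
  have adjB : adjoint (P ∘ₗ X - X ∘ₗ Q) = adjoint X ∘ₗ P - Q ∘ₗ adjoint X := by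
    rw [map_sub, adjoint_comp, adjoint_comp, hP, hQ]
  have t1 : trace ℂ E ((adjoint X ∘ₗ P) ∘ₗ (P ∘ₗ X)) = trace ℂ F (P ∘ₗ (X ∘ₗ adjoint X)) := by
    rw [show (adjoint X ∘ₗ P) ∘ₗ (P ∘ₗ X) = adjoint X ∘ₗ ((P ∘ₗ P) ∘ₗ X) from rfl, hP2,
      trace_comp_comm']
    rfl
  have t2 : trace ℂ E ((adjoint X ∘ₗ P) ∘ₗ (X ∘ₗ Q)) = trace ℂ E (Q ∘ₗ (adjoint X ∘ₗ X)) := by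
    rw [show (adjoint X ∘ₗ P) ∘ₗ (X ∘ₗ Q) = adjoint X ∘ₗ (P ∘ₗ (X ∘ₗ Q)) from rfl, hsub,
      show adjoint X ∘ₗ (X ∘ₗ Q) = (adjoint X ∘ₗ X) ∘ₗ Q from rfl,
      trace_comp_comm']
  have t3 : trace ℂ E ((Q ∘ₗ adjoint X) ∘ₗ (P ∘ₗ X)) = trace ℂ E (Q ∘ₗ (adjoint X ∘ₗ X)) := by
    rw [show (Q ∘ₗ adjoint X) ∘ₗ (P ∘ₗ X) = Q ∘ₗ (adjoint X ∘ₗ (P ∘ₗ X)) from rfl,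
      trace_comp_comm',
      show (adjoint X ∘ₗ (P ∘ₗ X)) ∘ₗ Q = adjoint X ∘ₗ (P ∘ₗ (X ∘ₗ Q)) from rfl, hsub,
      show adjoint X ∘ₗ (X ∘ₗ Q) = (adjoint X ∘ₗ X) ∘ₗ Q from rfl, trace_comp_comm']
  have t4 : trace ℂ E ((Q ∘ₗ adjoint X) ∘ₗ (X ∘ₗ Q)) = trace ℂ E (Q ∘ₗ (adjoint X ∘ₗ X)) := by
    rw [show (Q ∘ₗ adjoint X) ∘ₗ (X ∘ₗ Q) = Q ∘ₗ ((adjoint X ∘ₗ X) ∘ₗ Q) from rfl,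
      trace_comp_comm',
      show ((adjoint X ∘ₗ X) ∘ₗ Q) ∘ₗ Q = (adjoint X ∘ₗ X) ∘ₗ (Q ∘ₗ Q) from rfl, hQ2,
      trace_comp_comm']
  rw [adjB, sub_comp, comp_sub, comp_sub, map_sub, map_sub, map_sub, t1, t2, t3, t4]
  ring

end myHelpers

section keyTrace

open Module LinearMap

set_option linter.unusedSectionVars false
set_option maxHeartbeats 1000000

private lemma key_trace (ρ : ∀ α, V (s α) →ₗ[ℂ] V (t α)) (θ : Q₀ → ℝ)
    (W : ∀ a, Submodule ℂ (V a)) (hW : IsSubrep s t V ρ W) :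
    ∃ S : ℝ, 0 ≤ S ∧
      (∑ a, LinearMap.trace ℂ (V a) (myProj (W a) ∘ₗ Kop s t V ρ θ a))
        = ((∑ a, θ a * (finrank ℂ (W a) : ℝ) : ℝ) : ℂ) + (S : ℂ) ∧
      (S = 0 ↔ ∀ α, myProj (W (t α)) ∘ₗ ρ α = ρ α ∘ₗ myProj (W (s α))) := by
  classical
  set B : ∀ β : Q₁, V (s β) →ₗ[ℂ] V (t β) :=
    fun β => myProj (W (t β)) ∘ₗ ρ β - ρ β ∘ₗ myProj (W (s β)) with hBdef
  choose r hr0 hrtr hrzero using fun β => my_trace_adjoint_comp_self (B β)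
  have hsub : ∀ β, myProj (W (t β)) ∘ₗ (ρ β ∘ₗ myProj (W (s β))) = ρ β ∘ₗ myProj (W (s β)) := by
    intro β; ext x
    exact myProj_eq_self _ (hW β _ (myProj_apply_mem _ _))
  have hArr : ∀ β, (r β : ℂ) =
      LinearMap.trace ℂ (V (t β)) (myProj (W (t β)) ∘ₗ (ρ β ∘ₗ LinearMap.adjoint (ρ β)))
        - LinearMap.trace ℂ (V (s β)) (myProj (W (s β)) ∘ₗ (LinearMap.adjoint (ρ β) ∘ₗ ρ β)) := by
    intro β
    rw [← hrtr β]
    exact arrow_trace_identity (ρ β) _ _ (myProj_adjoint _) (myProj_adjoint _)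
      (myProj_idem _) (myProj_idem _) (hsub β)
  refine ⟨∑ β, r β, Finset.sum_nonneg fun β _ => hr0 β, ?_, ?_⟩
  · have hKop : ∀ a, LinearMap.trace ℂ (V a) (myProj (W a) ∘ₗ Kop s t V ρ θ a)
        = (θ a : ℂ) * (finrank ℂ (W a) : ℂ)
          + (∑ α : {α : Q₁ // t α = a},
              LinearMap.trace ℂ (V a) (myProj (W a) ∘ₗ tTerm s t V ρ a α))
          - ∑ α : {α : Q₁ // s α = a},
              LinearMap.trace ℂ (V a) (myProj (W a) ∘ₗ sTerm s t V ρ a α) := by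
      intro a
      have hsplit : myProj (W a) ∘ₗ Kop s t V ρ θ a
          = (θ a : ℂ) • myProj (W a)
            + (∑ α : {α : Q₁ // t α = a}, myProj (W a) ∘ₗ tTerm s t V ρ a α)
            - ∑ α : {α : Q₁ // s α = a}, myProj (W a) ∘ₗ sTerm s t V ρ a α := by
        ext x
        simp [Kop, LinearMap.sum_apply, map_sum, map_sub, map_add, map_smul]
      rw [hsplit, map_sub, map_add, map_smul, map_sum, map_sum, myProj_trace]
      simp [smul_eq_mul]
    rw [Finset.sum_congr rfl fun a _ => hKop a]
    rw [Finset.sum_sub_distrib, Finset.sum_add_distrib]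
    have hTsum : (∑ a, ∑ α : {α : Q₁ // t α = a},
        LinearMap.trace ℂ (V a) (myProj (W a) ∘ₗ tTerm s t V ρ a α))
        = ∑ β, LinearMap.trace ℂ (V (t β))
            (myProj (W (t β)) ∘ₗ (ρ β ∘ₗ LinearMap.adjoint (ρ β))) := by
      rw [← Fintype.sum_fiberwise t (fun β => LinearMap.trace ℂ (V (t β))
        (myProj (W (t β)) ∘ₗ (ρ β ∘ₗ LinearMap.adjoint (ρ β))))]
      refine Finset.sum_congr rfl fun a _ => Finset.sum_congr rfl fun α _ => ?_
      obtain ⟨β, hβ⟩ := α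
      subst hβ
      rfl
    have hSsum : (∑ a, ∑ α : {α : Q₁ // s α = a},
        LinearMap.trace ℂ (V a) (myProj (W a) ∘ₗ sTerm s t V ρ a α))
        = ∑ β, LinearMap.trace ℂ (V (s β))
            (myProj (W (s β)) ∘ₗ (LinearMap.adjoint (ρ β) ∘ₗ ρ β)) := by
      rw [← Fintype.sum_fiberwise s (fun β => LinearMap.trace ℂ (V (s β))
        (myProj (W (s β)) ∘ₗ (LinearMap.adjoint (ρ β) ∘ₗ ρ β)))]
      refine Finset.sum_congr rfl fun a _ => Finset.sum_congr rfl fun α _ => ?_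
      obtain ⟨β, hβ⟩ := α
      subst hβ
      rfl
    rw [hTsum, hSsum]
    push_cast
    rw [show (∑ β, ((r β : ℂ))) = _ from Finset.sum_congr rfl fun β _ => hArr β,
      Finset.sum_sub_distrib]
    ring
  · rw [Finset.sum_eq_zero_iff_of_nonneg fun β _ => hr0 β]
    constructor
    · intro h α
      have hB0 : B α = 0 := hrzero α (h α (Finset.mem_univ α))
      have := sub_eq_zero.mp (by simpa [hBdef] using hB0)
      exact this
    · intro h β _
      have hB0 : B β = 0 := by
        simp [hBdef, sub_eq_zero, h β]
      have := hrtr β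
      rw [hB0] at this
      simp only [map_zero, LinearMap.zero_comp, LinearMap.comp_zero] at this
      exact_mod_cast this.symm

end keyTrace

section mainLemmas

open Module LinearMap

set_option linter.unusedSectionVars false
set_option maxHeartbeats 1000000

private lemma stable_to_schur (ρ : ∀ α, V (s α) →ₗ[ℂ] V (t α)) (θ : Q₀ → ℝ)
    (hnz : 0 < ∑ a, finrank ℂ (V a)) (hst : IsStableRep s t V ρ θ) :
    IsSchurRep s t V ρ := by
  intro f hf
  obtain ⟨a₀, ha₀⟩ : ∃ a, 0 < finrank ℂ (V a) := by
    by_contra h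
    push_neg at h
    have : ∑ a, finrank ℂ (V a) = 0 := Finset.sum_eq_zero fun a _ => Nat.le_zero.mp (h a)
    omega
  haveI : Nontrivial (V a₀) := Module.nontrivial_of_finrank_pos ha₀
  obtain ⟨μ, hμ⟩ := Module.End.exists_eigenvalue (f a₀ : Module.End ℂ (V a₀))
  obtain ⟨v, hv⟩ := hμ.exists_hasEigenvector
  set g : ∀ a, V a →ₗ[ℂ] V a := fun a => f a - μ • LinearMap.id with hg
  by_cases hker : ∀ a, LinearMap.ker (g a) = ⊤
  · refine ⟨μ, fun a => ?_⟩
    have h0 : g a = 0 := LinearMap.ker_eq_top.mp (hker a)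
    have := sub_eq_zero.mp h0
    simpa [hg] using this
  · exfalso
    push_neg at hker
    obtain ⟨a₁, ha₁⟩ := hker
    have hfcomm : ∀ α x, f (t α) (ρ α x) = ρ α (f (s α) x) := fun α x =>
      LinearMap.ext_iff.mp (hf α) x
    have hgendo : ∀ α, g (t α) ∘ₗ ρ α = ρ α ∘ₗ g (s α) := by
      intro α
      ext x
      simp [hg, hfcomm α x]
    have hcomm : ∀ α x, g (t α) (ρ α x) = ρ α (g (s α) x) := by
      intro α x
      exact LinearMap.ext_iff.mp (hgendo α) x
    set K : ∀ a, Submodule ℂ (V a) := fun a => LinearMap.ker (g a) with hK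
    set R : ∀ a, Submodule ℂ (V a) := fun a => LinearMap.range (g a) with hR
    have hKsub : IsSubrep s t V ρ K := by
      intro α x hx
      have hx0 : g (s α) x = 0 := hx
      simp only [hK, LinearMap.mem_ker, hcomm α x, hx0, map_zero]
    have hRsub : IsSubrep s t V ρ R := by
      rintro α y ⟨x, rfl⟩
      exact ⟨ρ α x, hcomm α x⟩
    have hva₀ : v ∈ K a₀ := by
      simp only [hK, LinearMap.mem_ker, hg]
      simp [hv.apply_eq_smul]
    have hKnz : K a₀ ≠ ⊥ := Submodule.ne_bot_iff _ |>.mpr ⟨v, hva₀, hv.2⟩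
    have hga₁ : g a₁ ≠ 0 := fun h => ha₁ (LinearMap.ker_eq_top.mpr h)
    have hRnz : R a₁ ≠ ⊥ := by
      simpa [hR, LinearMap.range_eq_bot] using hga₁
    have hKfr : 0 < finrank ℂ (K a₀) :=
      Nat.pos_of_ne_zero fun h => hKnz (Submodule.finrank_eq_zero.mp h)
    have hRfr : 0 < finrank ℂ (R a₁) :=
      Nat.pos_of_ne_zero fun h => hRnz (Submodule.finrank_eq_zero.mp h)
    have hrn : ∀ a, finrank ℂ (R a) + finrank ℂ (K a) = finrank ℂ (V a) := fun a =>
      LinearMap.finrank_range_add_finrank_ker (g a)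
    have hRpr : R a₀ ≠ ⊤ := by
      intro h
      have := hrn a₀
      rw [h, finrank_top] at this
      have hK0 : finrank ℂ (K a₀) = 0 := by omega
      omega
    have hs1 := hst.2 K hKsub ⟨a₀, hKnz⟩ ⟨a₁, ha₁⟩
    have hs2 := hst.2 R hRsub ⟨a₁, hRnz⟩ ⟨a₀, hRpr⟩
    -- arithmetic
    unfold subSlope repSlope at hs1 hs2
    set dV : ℝ := ∑ a, θ a * (finrank ℂ (V a) : ℝ)
    set rV : ℝ := ∑ a, ((finrank ℂ (V a) : ℝ))
    set dK : ℝ := ∑ a, θ a * (finrank ℂ (K a) : ℝ)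
    set rK : ℝ := ∑ a, ((finrank ℂ (K a) : ℝ))
    set dR : ℝ := ∑ a, θ a * (finrank ℂ (R a) : ℝ)
    set rR : ℝ := ∑ a, ((finrank ℂ (R a) : ℝ))
    have hrVpos : 0 < rV := by
      have : (0 : ℝ) < ((∑ a, finrank ℂ (V a) : ℕ) : ℝ) := by exact_mod_cast hnz
      simpa [rV] using this
    have hrKpos : 0 < rK := by
      refine lt_of_lt_of_le ?_ (Finset.single_le_sum (f := fun a => ((finrank ℂ (K a) : ℝ)))
        (fun a _ => by positivity) (Finset.mem_univ a₀))
      simpa using hKfr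
    have hrRpos : 0 < rR := by
      refine lt_of_lt_of_le ?_ (Finset.single_le_sum (f := fun a => ((finrank ℂ (R a) : ℝ)))
        (fun a _ => by positivity) (Finset.mem_univ a₁))
      simpa using hRfr
    have hradd : rR + rK = rV := by
      rw [← Finset.sum_add_distrib]
      exact Finset.sum_congr rfl fun a _ => by exact_mod_cast hrn a
    have hdadd : dR + dK = dV := by
      rw [← Finset.sum_add_distrib]
      refine Finset.sum_congr rfl fun a _ => ?_
      rw [← mul_add]
      congr 1
      exact_mod_cast hrn a
    rw [div_lt_div_iff₀ hrKpos hrVpos] at hs1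
    rw [div_lt_div_iff₀ hrRpos hrVpos] at hs2
    have e1 : dK * rV + dR * rV = dV * rV := by rw [← hdadd]; ring
    have e2 : dV * rK + dV * rR = dV * rV := by rw [← hradd]; ring
    linarith [hs1, hs2, e1, e2]

private lemma irr_to_stable (ρ : ∀ α, V (s α) →ₗ[ℂ] V (t α)) (θ : Q₀ → ℝ)
    (hnz : 0 < ∑ a, finrank ℂ (V a)) (hEH : IsEinsteinHermitian s t V ρ θ)
    (hirr : IsIrreducibleMetric s t V ρ) : IsStableRep s t V ρ θ := by
  obtain ⟨c, hc⟩ := hEH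
  set dV : ℝ := ∑ a, θ a * (finrank ℂ (V a) : ℝ) with hdV
  set rV : ℝ := ∑ a, ((finrank ℂ (V a) : ℝ)) with hrV
  have hrVpos : 0 < rV := by
    have : (0 : ℝ) < ((∑ a, finrank ℂ (V a) : ℕ) : ℝ) := by exact_mod_cast hnz
    simpa [hrV] using this
  -- c equals the slope
  obtain ⟨S0, hS00, heq0, hiff0⟩ :=
    key_trace s t V ρ θ (fun a => (⊤ : Submodule ℂ (V a))) (fun α x _ => trivial)
  have hS0 : S0 = 0 := hiff0.mpr fun α => by rw [myProj_top, myProj_top, id_comp, comp_id]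
  have hL0 : (∑ a, LinearMap.trace ℂ (V a)
      (myProj (⊤ : Submodule ℂ (V a)) ∘ₗ Kop s t V ρ θ a)) = c * ((rV : ℝ) : ℂ) := by
    have : ((rV : ℝ) : ℂ) = ∑ a, ((finrank ℂ (V a) : ℂ)) := by
      rw [hrV]; push_cast; rfl
    rw [this, Finset.mul_sum]
    refine Finset.sum_congr rfl fun a _ => ?_
    rw [myProj_top, id_comp, hc a, map_smul, trace_id]
    simp [smul_eq_mul]
  have hceq : c * ((rV : ℝ) : ℂ) = ((dV : ℝ) : ℂ) := by
    rw [← hL0, heq0, hS0]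
    have hfr : (∑ a, θ a * ((finrank ℂ (⊤ : Submodule ℂ (V a)) : ℝ))) = dV := by
      rw [hdV]
      exact Finset.sum_congr rfl fun a _ => by rw [finrank_top]
    rw [hfr]
    simp
  have hcval : c = (((dV / rV : ℝ)) : ℂ) := by
    have hrVne : ((rV : ℝ) : ℂ) ≠ 0 := by
      simp only [ne_eq, Complex.ofReal_eq_zero]
      exact ne_of_gt hrVpos
    rw [Complex.ofReal_div, eq_div_iff hrVne]
    exact hceq
  refine ⟨hnz, ?_⟩
  intro W hWsub hWnz hWpr
  obtain ⟨S, hSnn, heq, hiff⟩ := key_trace s t V ρ θ W hWsub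
  set dW : ℝ := ∑ a, θ a * (finrank ℂ (W a) : ℝ) with hdW
  set rW : ℝ := ∑ a, ((finrank ℂ (W a) : ℝ)) with hrW
  obtain ⟨a₂, ha₂⟩ := hWnz
  have hWfr : 0 < finrank ℂ (W a₂) :=
    Nat.pos_of_ne_zero fun h => ha₂ (Submodule.finrank_eq_zero.mp h)
  have hrWpos : 0 < rW := by
    refine lt_of_lt_of_le ?_ (Finset.single_le_sum (f := fun a => ((finrank ℂ (W a) : ℝ)))
      (fun a _ => by positivity) (Finset.mem_univ a₂))
    simpa using hWfr
  have hLW : (∑ a, LinearMap.trace ℂ (V a) (myProj (W a) ∘ₗ Kop s t V ρ θ a))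
      = c * ((rW : ℝ) : ℂ) := by
    have : ((rW : ℝ) : ℂ) = ∑ a, ((finrank ℂ (W a) : ℂ)) := by
      rw [hrW]; push_cast; rfl
    rw [this, Finset.mul_sum]
    refine Finset.sum_congr rfl fun a _ => ?_
    rw [hc a]
    have : myProj (W a) ∘ₗ ((c • LinearMap.id) : V a →ₗ[ℂ] V a) = c • myProj (W a) := by
      ext x; simp
    rw [this, map_smul, myProj_trace]
    simp [smul_eq_mul]
  have hkey : (dV / rV) * rW = dW + S := by
    have h1 : c * ((rW : ℝ) : ℂ) = ((dW : ℝ) : ℂ) + ((S : ℝ) : ℂ) := by rw [← hLW, heq]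
    rw [hcval] at h1
    exact_mod_cast h1
  have hrVne : rV ≠ 0 := ne_of_gt hrVpos
  unfold subSlope repSlope
  show dW / rW < dV / rV
  by_cases hS : S = 0
  · exfalso
    have hcomm := hiff.mp hS
    set f : ∀ a, V a →ₗ[ℂ] V a := fun a => Complex.I • myProj (W a) with hfdef
    have hend : IsRepEndo s t V ρ f := by
      intro α
      rw [hfdef]
      simp only [LinearMap.smul_comp, LinearMap.comp_smul]
      rw [hcomm α]
    have hskew : IsSkewHermEndo V f := by
      intro a v w
      simp only [hfdef, LinearMap.smul_apply]
      rw [inner_smul_left, inner_smul_right]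
      have hsa : inner (𝕜 := ℂ) (myProj (W a) v) w = inner (𝕜 := ℂ) v (myProj (W a) w) := by
        conv_lhs => rw [← myProj_adjoint (W a)]
        rw [LinearMap.adjoint_inner_left]
      rw [hsa, Complex.conj_I]
      ring
    obtain ⟨c', hc'⟩ := hirr f hend hskew
    set lam : ℂ := -Complex.I * c' with hlam
    have hii : (-Complex.I) * Complex.I = 1 := by simp [Complex.I_mul_I]
    have hP : ∀ a (x : V a), myProj (W a) x = lam • x := by
      intro a x
      have h1 : Complex.I • myProj (W a) x = c' • x := by
        have := LinearMap.ext_iff.mp (hc' a) x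
        simpa [hfdef] using this
      have h2 : (-Complex.I) • (Complex.I • myProj (W a) x) = (-Complex.I) • (c' • x) := by
        rw [h1]
      rw [smul_smul, smul_smul, hii, one_smul] at h2
      rw [h2, hlam]
    obtain ⟨x, hxW, hxne⟩ := (Submodule.ne_bot_iff _).mp ha₂
    have hx1 : lam • x = x := by rw [← hP a₂ x, myProj_eq_self _ hxW]
    have hlam1 : lam = 1 := by
      have h0 : (lam - 1) • x = 0 := by rw [sub_smul, one_smul, hx1, sub_self]
      rcases smul_eq_zero.mp h0 with h | h
      · exact sub_eq_zero.mp h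
      · exact absurd h hxne
    obtain ⟨a₃, ha₃⟩ := hWpr
    refine ha₃ (Submodule.eq_top_iff'.mpr fun y => ?_)
    have hmem := myProj_apply_mem (W a₃) y
    rwa [hP a₃ y, hlam1, one_smul] at hmem
  · have hSpos : 0 < S := lt_of_le_of_ne hSnn (Ne.symm hS)
    rw [div_lt_div_iff₀ hrWpos hrVpos]
    have hmul : dV * rW = (dW + S) * rV := by
      field_simp at hkey
      linarith [hkey]
    nlinarith [hSpos, hrVpos, hmul, hrWpos]

end mainLemmas

/-- for a rational weight `θ`, a nonzero representation `(V, ρ)` and an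
Einstein–Hermitian metric `h` on it with respect to `θ` (the metric being given by the
inner products on the `V a`), the following are equivalent: `h` is irreducible; `(V, ρ)`
is `θ`-stable; `(V, ρ)` is Schur. -/
theorem irreducible_iff_stable_iff_schur
    {Q₀ Q₁ : Type*} [Fintype Q₀] [Fintype Q₁] [Nonempty Q₀] [DecidableEq Q₀]
    (s t : Q₁ → Q₀)
    (V : Q₀ → Type*) [∀ a, NormedAddCommGroup (V a)] [∀ a, InnerProductSpace ℂ (V a)]
    [∀ a, FiniteDimensional ℂ (V a)]
    (ρ : ∀ α, V (s α) →ₗ[ℂ] V (t α))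
    (θ : Q₀ → ℚ)
    (hnz : 0 < ∑ a, Module.finrank ℂ (V a))
    (hEH : IsEinsteinHermitian s t V ρ (fun a => (θ a : ℝ))) :
    (IsIrreducibleMetric s t V ρ ↔ IsStableRep s t V ρ (fun a => (θ a : ℝ))) ∧
    (IsStableRep s t V ρ (fun a => (θ a : ℝ)) ↔ IsSchurRep s t V ρ) := by
  have h1 : IsStableRep s t V ρ (fun a => (θ a : ℝ)) → IsSchurRep s t V ρ :=
    stable_to_schur s t V ρ (fun a => (θ a : ℝ)) hnz
  have h2 : IsSchurRep s t V ρ → IsIrreducibleMetric s t V ρ :=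
    fun hS f hf _ => hS f hf
  have h3 : IsIrreducibleMetric s t V ρ → IsStableRep s t V ρ (fun a => (θ a : ℝ)) :=
    irr_to_stable s t V ρ (fun a => (θ a : ℝ)) hnz hEH
  exact ⟨⟨h3, fun hst => h2 (h1 hst)⟩, ⟨h1, fun hS => h3 (h2 hS)⟩⟩
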